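/- Let q > 1, a > 0, and c > 1 be real numbers with c < q^{1/2}. Then for every integer n > a and every integer t with 1 ≤ t < a and every real r of the form r = r₂ · r₁^{(n-e)/t} with 0 ≤ e < t, r₂ < c, and r₁ ≤ q^t - 1, provided additionally (q^t/(q^t-1))^{s/t} > c for all 1 ≤ t < a where s is chosen with n > s, one has r < q^n. -/

import Mathlib

/-- the numerical estimate underlying the coefficient bound for
ramification divisors of polarized endomorphisms (Theorem 3.1).  With `q > 1`,
`a > 0`, `1 < c < q^{1/2}`, `s` such that `(q^t/(q^t-1))^{s/t} > c` for all
integers `1 ≤ t < a`, and an integer `n > max(a, s)`: any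
`r = r₂ · r₁^{(n-e)/t}` with integers `1 ≤ t < a`, `0 ≤ e < t`, and reals
`0 ≤ r₂ < c`, `0 ≤ r₁ ≤ q^t - 1` satisfies `r < q^n`. -/
theorem stmt_6 (q a c s : ℝ) (hq : 1 < q) (ha : 0 < a) (hc : 1 < c)
    (hcq : c < q ^ ((1 : ℝ) / 2))
    (hs : ∀ t : ℤ, 1 ≤ t → (t : ℝ) < a →
      c < (q ^ (t : ℝ) / (q ^ (t : ℝ) - 1)) ^ (s / (t : ℝ)))
    (n t e : ℤ) (hna : a < (n : ℝ)) (hns : s < (n : ℝ))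
    (ht1 : 1 ≤ t) (hta : (t : ℝ) < a) (he0 : 0 ≤ e) (het : e < t)
    (r r₁ r₂ : ℝ) (hr₁0 : 0 ≤ r₁) (hr₂0 : 0 ≤ r₂)
    (hr₂ : r₂ < c) (hr₁ : r₁ ≤ q ^ (t : ℝ) - 1)
    (hr : r = r₂ * r₁ ^ (((n : ℝ) - (e : ℝ)) / (t : ℝ))) :
    r < q ^ (n : ℝ) := by
  have hq0 : (0 : ℝ) < q := lt_trans one_pos hq
  have hT1 : (1 : ℝ) ≤ (t : ℝ) := by exact_mod_cast ht1
  have hT0 : (0 : ℝ) < (t : ℝ) := lt_of_lt_of_le one_pos hT1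
  have hE0 : (0 : ℝ) ≤ (e : ℝ) := by exact_mod_cast he0
  have hET : (e : ℝ) < (t : ℝ) := by exact_mod_cast het
  have hn1 : (1 : ℝ) < (n : ℝ) := lt_trans (lt_of_le_of_lt hT1 hta) hna
  set x : ℝ := ((n : ℝ) - (e : ℝ)) / (t : ℝ) with hx
  have hx0 : 0 ≤ x := div_nonneg (by linarith) (le_of_lt hT0)
  by_cases hle : r₁ ≤ 1
  · -- r ≤ r₂ < c < q^(1/2) ≤ q^n
    have h1 : r₁ ^ x ≤ 1 := Real.rpow_le_one hr₁0 hle hx0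
    have h2 : r ≤ r₂ := by
      rw [hr]
      calc r₂ * r₁ ^ x ≤ r₂ * 1 := by
            exact mul_le_mul_of_nonneg_left h1 hr₂0
        _ = r₂ := mul_one r₂
    have h3 : q ^ ((1 : ℝ) / 2) ≤ q ^ (n : ℝ) :=
      Real.rpow_le_rpow_left_iff hq |>.mpr (by linarith)
    linarith
  · push_neg at hle
    set Q : ℝ := q ^ (t : ℝ) with hQ
    have hQpos : 0 < Q := Real.rpow_pos_of_pos hq0 _
    set D : ℝ := Q - 1 with hD
    have hD1 : 1 < D := lt_of_lt_of_le hle hr₁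
    have hD0 : 0 < D := lt_trans one_pos hD1
    have hQD : 1 < Q / D := by
      rw [lt_div_iff₀ hD0]; simp [hD]
    -- key: r₁^x ≤ D^x
    have h1 : r₁ ^ x ≤ D ^ x := Real.rpow_le_rpow hr₁0 hr₁ hx0
    have hDx0 : 0 < D ^ x := Real.rpow_pos_of_pos hD0 x
    have h2 : r < c * D ^ x := by
      rw [hr]
      calc r₂ * r₁ ^ x ≤ r₂ * D ^ x := mul_le_mul_of_nonneg_left h1 hr₂0
        _ < c * D ^ x := by
            exact mul_lt_mul_of_pos_right hr₂ hDx0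
    have hsc : c < (Q / D) ^ (s / (t : ℝ)) := hs t ht1 hta
    have h3 : (Q / D) ^ (s / (t : ℝ)) ≤ (Q / D) ^ ((n : ℝ) / (t : ℝ)) := by
      apply Real.rpow_le_rpow_left_iff hQD |>.mpr
      gcongr
    have h4 : r < (Q / D) ^ ((n : ℝ) / (t : ℝ)) * D ^ x := by
      calc r < c * D ^ x := h2
        _ < (Q / D) ^ (s / (t : ℝ)) * D ^ x := mul_lt_mul_of_pos_right hsc hDx0
        _ ≤ _ := mul_le_mul_of_nonneg_right h3 (le_of_lt hDx0)
    have hQn : Q ^ ((n : ℝ) / (t : ℝ)) = q ^ (n : ℝ) := by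
      rw [hQ, ← Real.rpow_mul (le_of_lt hq0)]
      congr 1
      field_simp
    have hcalc : (Q / D) ^ ((n : ℝ) / (t : ℝ)) * D ^ x
        = q ^ (n : ℝ) * D ^ (-(e : ℝ) / (t : ℝ)) := by
      rw [Real.div_rpow (le_of_lt hQpos) (le_of_lt hD0), hQn]
      rw [div_mul_eq_mul_div, mul_div_assoc, ← Real.rpow_sub hD0]
      congr 1
      field_simp [hx]
      congr 1
      rw [hx, div_mul_cancel₀ _ (ne_of_gt hT0)]
      ring
    have h5 : D ^ (-(e : ℝ) / (t : ℝ)) ≤ 1 :=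
      Real.rpow_le_one_of_one_le_of_nonpos (le_of_lt hD1)
        (div_nonpos_of_nonpos_of_nonneg (by linarith) (le_of_lt hT0))
    have hqn0 : 0 < q ^ (n : ℝ) := Real.rpow_pos_of_pos hq0 _
    calc r < q ^ (n : ℝ) * D ^ (-(e : ℝ) / (t : ℝ)) := by rw [← hcalc]; exact h4
      _ ≤ q ^ (n : ℝ) * 1 := mul_le_mul_of_nonneg_left h5 (le_of_lt hqn0)
      _ = q ^ (n : ℝ) := mul_one _
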